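/- Let G be a finite simple graph that is MEG-extremal, i.e., meg(G) equals the number of vertices of G, and let H be any finite simple graph. Then the strong product G ⊠ H is MEG-extremal, i.e., meg(G ⊠ H) equals the number of vertices of G ⊠ H. -/

import Mathlib

open SimpleGraph

/-- A pair of vertices `u`, `v` monitors an edge `e` if `u` and `v` are reachable from
each other and `e` belongs to every shortest path (walk of length `G.dist u v`)
between `u` and `v`. -/
def Monitors {V : Type*} (G : SimpleGraph V) (u v : V) (e : Sym2 V) : Prop :=
  G.Reachable u v ∧ ∀ p : G.Walk u v, p.length = G.dist u v → e ∈ p.edges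

/-- A monitoring edge-geodetic set of `G`: every edge of `G` is monitored by some
pair of vertices of `M`. -/
def IsMEGSet {V : Type*} (G : SimpleGraph V) (M : Set V) : Prop :=
  ∀ e ∈ G.edgeSet, ∃ u ∈ M, ∃ v ∈ M, Monitors G u v e

/-- The monitoring edge-geodetic number of `G`: the minimum size of an MEG-set. -/
noncomputable def meg {V : Type*} [Fintype V] (G : SimpleGraph V) : ℕ :=
  sInf {n : ℕ | ∃ M : Finset V, IsMEGSet G ↑M ∧ M.card = n}

/-- The strong product of two simple graphs: `(a,b)` is adjacent to `(a',b')` iff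
`a = a'` and `b ~ b'`, or `a ~ a'` and `b = b'`, or `a ~ a'` and `b ~ b'`. -/
def strongProd {α β : Type*} (G : SimpleGraph α) (H : SimpleGraph β) :
    SimpleGraph (α × β) where
  Adj x y := (x.1 = y.1 ∧ H.Adj x.2 y.2) ∨ (G.Adj x.1 y.1 ∧ x.2 = y.2) ∨
    (G.Adj x.1 y.1 ∧ H.Adj x.2 y.2)
  symm := ⟨fun x y h => by
    rcases h with ⟨h1, h2⟩ | ⟨h1, h2⟩ | ⟨h1, h2⟩
    · exact Or.inl ⟨h1.symm, h2.symm⟩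
    · exact Or.inr (Or.inl ⟨h1.symm, h2.symm⟩)
    · exact Or.inr (Or.inr ⟨h1.symm, h2.symm⟩)⟩
  loopless := ⟨fun x h => by
    rcases h with ⟨_, h2⟩ | ⟨h1, _⟩ | ⟨h1, _⟩
    · exact H.ne_of_adj h2 rfl
    · exact G.ne_of_adj h1 rfl
    · exact G.ne_of_adj h1 rfl⟩

namespace MEGAux

variable {α β : Type*} {G : SimpleGraph α} {H : SimpleGraph β}

/-- Embedding of `G` into the strong product at a fixed `H`-coordinate. -/
def liftG (b : β) : G →g strongProd G H :=
  ⟨fun a => (a, b), fun h => Or.inr (Or.inl ⟨h, rfl⟩)⟩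

/-- Embedding of `H` into the strong product at a fixed `G`-coordinate. -/
def liftH (a : α) : H →g strongProd G H :=
  ⟨fun c => (a, c), fun h => Or.inl ⟨rfl, h⟩⟩

lemma map_liftH (x : α) (c c' : β) :
    Sym2.map (liftH (G := G) (H := H) x) s(c, c') = s((x, c), (x, c')) :=
  Sym2.map_pair_eq _ _ _

lemma map_liftG (b : β) (a a' : α) :
    Sym2.map (liftG (G := G) (H := H) b) s(a, a') = s((a, b), (a', b)) :=
  Sym2.map_pair_eq _ _ _

/-- Combine a `G`-walk and an `H`-walk into a walk of the strong product,
moving diagonally first. -/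
def zipWalk : ∀ {x y : α} {b1 b2 : β}, G.Walk x y → H.Walk b1 b2 →
    (strongProd G H).Walk (x, b1) (y, b2)
  | x, _, _, _, Walk.nil, q => q.map (liftH x)
  | _, _, b1, _, Walk.cons h p, Walk.nil => (Walk.cons h p).map (liftG b1)
  | _, _, _, _, Walk.cons hg p, Walk.cons hh q =>
      Walk.cons (show (strongProd G H).Adj _ _ from Or.inr (Or.inr ⟨hg, hh⟩)) (zipWalk p q)

lemma zipWalk_length : ∀ {x y : α} {b1 b2 : β} (p : G.Walk x y) (q : H.Walk b1 b2),
    (zipWalk p q).length = max p.length q.length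
  | _, _, _, _, Walk.nil, q => by
      simp [zipWalk]
      erw [Walk.length_map]
  | _, _, _, _, Walk.cons h p, Walk.nil => by
      simp [zipWalk]
      erw [Walk.length_cons, Walk.length_map]
  | _, _, _, _, Walk.cons hg p, Walk.cons hh q => by
      simp only [zipWalk, Walk.length_cons, zipWalk_length p q]
      omega

lemma zipWalk_edges : ∀ {x y : α} {b1 b2 : β} (p : G.Walk x y) (q : H.Walk b1 b2)
    {u v : α} {b : β}, u ≠ v → s((u, b), (v, b)) ∈ (zipWalk p q).edges →
    b = b2 ∧ s(u, v) ∈ p.edges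
  | x, _, _, _, Walk.nil, q => by
      intro huv hmem
      erw [zipWalk, Walk.edges_map, List.mem_map] at hmem
      obtain ⟨e, he, hmape⟩ := hmem
      exfalso
      induction e using Sym2.ind with
      | _ c c' =>
        rw [map_liftH, Sym2.eq_iff] at hmape
        rcases hmape with ⟨h1, h2⟩ | ⟨h1, h2⟩
        · exact huv ((congrArg Prod.fst h1).symm.trans (congrArg Prod.fst h2))
        · exact huv ((congrArg Prod.fst h2).symm.trans (congrArg Prod.fst h1))
  | _, _, b1, _, Walk.cons h p, Walk.nil => by
      intro huv hmem
      erw [zipWalk, Walk.edges_map, List.mem_map] at hmem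
      obtain ⟨e, he, hmape⟩ := hmem
      revert he
      induction e using Sym2.ind with
      | _ a a' =>
        intro he
        rw [map_liftG, Sym2.eq_iff] at hmape
        rcases hmape with ⟨h1, h2⟩ | ⟨h1, h2⟩
        · injection h1 with hu hb
          injection h2 with hv _
          rw [hu, hv] at he
          exact ⟨hb.symm, he⟩
        · injection h1 with hu hb
          injection h2 with hv _
          rw [hu, hv, Sym2.eq_swap] at he
          exact ⟨hb.symm, he⟩
  | _, _, _, _, Walk.cons hg p, Walk.cons hh q => by
      intro huv hmem
      rw [zipWalk, Walk.edges_cons, List.mem_cons] at hmem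
      rcases hmem with hmem | hmem
      · exfalso
        rw [Sym2.eq_iff] at hmem
        rcases hmem with ⟨h1, h2⟩ | ⟨h1, h2⟩
        · exact hh.ne ((congrArg Prod.snd h1).symm.trans (congrArg Prod.snd h2))
        · exact hh.ne ((congrArg Prod.snd h2).symm.trans (congrArg Prod.snd h1))
      · obtain ⟨hb, hsm⟩ := zipWalk_edges p q huv hmem
        exact ⟨hb, by rw [Walk.edges_cons]; exact List.mem_cons_of_mem _ hsm⟩

/-- Projections of a walk in the strong product. -/
lemma proj_bound : ∀ {P Q : α × β} (W : (strongProd G H).Walk P Q),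
    (∃ p : G.Walk P.1 Q.1, p.length ≤ W.length) ∧
    (∃ q : H.Walk P.2 Q.2, q.length ≤ W.length)
  | _, _, Walk.nil => ⟨⟨Walk.nil, le_rfl⟩, ⟨Walk.nil, le_rfl⟩⟩
  | P, Q, Walk.cons h W => by
      obtain ⟨⟨p, hp⟩, ⟨q, hq⟩⟩ := proj_bound W
      rcases h with ⟨h1, h2⟩ | ⟨h1, h2⟩ | ⟨h1, h2⟩
      · exact ⟨⟨p.copy h1.symm rfl, by erw [Walk.length_copy, Walk.length_cons]; omega⟩,
          ⟨Walk.cons h2 q, by erw [Walk.length_cons, Walk.length_cons]; omega⟩⟩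
      · exact ⟨⟨Walk.cons h1 p, by erw [Walk.length_cons, Walk.length_cons]; omega⟩,
          ⟨q.copy h2.symm rfl, by erw [Walk.length_copy, Walk.length_cons]; omega⟩⟩
      · exact ⟨⟨Walk.cons h1 p, by erw [Walk.length_cons, Walk.length_cons]; omega⟩,
          ⟨Walk.cons h2 q, by erw [Walk.length_cons, Walk.length_cons]; omega⟩⟩

/-- Key structural lemma: if a pair monitors an edge of a `G`-layer in the strong
product, then both vertices lie in that layer and their projections monitor the
projected edge in `G`. -/
lemma monitors_of_monitors_prod {P Q : α × β} {u v : α} {b : β}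
    (huv : G.Adj u v)
    (hm : Monitors (strongProd G H) P Q s((u, b), (v, b))) :
    P.2 = b ∧ Q.2 = b ∧ Monitors G P.1 Q.1 s(u, v) := by
  obtain ⟨hreach, hall⟩ := hm
  obtain ⟨W0⟩ := hreach
  obtain ⟨⟨p1, _⟩, ⟨q1, _⟩⟩ := proj_bound W0
  have hreachG : G.Reachable P.1 Q.1 := ⟨p1⟩
  have hreachH : H.Reachable P.2 Q.2 := ⟨q1⟩
  obtain ⟨p0, hp0⟩ := hreachG.exists_walk_length_eq_dist
  obtain ⟨q0, hq0⟩ := hreachH.exists_walk_length_eq_dist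
  have hrP : (strongProd G H).Reachable P Q := ⟨W0⟩
  obtain ⟨Wd, hWd⟩ := hrP.exists_walk_length_eq_dist
  obtain ⟨⟨p2, hp2⟩, ⟨q2, hq2⟩⟩ := proj_bound Wd
  have hm_le : G.dist P.1 Q.1 ≤ (strongProd G H).dist P Q :=
    le_trans (SimpleGraph.dist_le p2) (hWd ▸ hp2)
  have hn_le : H.dist P.2 Q.2 ≤ (strongProd G H).dist P Q :=
    le_trans (SimpleGraph.dist_le q2) (hWd ▸ hq2)
  have hd : (strongProd G H).dist P Q = max (G.dist P.1 Q.1) (H.dist P.2 Q.2) := by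
    refine le_antisymm ?_ (max_le hm_le hn_le)
    have := SimpleGraph.dist_le (zipWalk p0 q0)
    rwa [zipWalk_length, hp0, hq0] at this
  have key : ∀ p : G.Walk P.1 Q.1, p.length = G.dist P.1 Q.1 → s(u, v) ∈ p.edges := by
    intro p hp
    have hE := hall (zipWalk p q0) (by rw [zipWalk_length, hp, hq0, hd])
    exact (zipWalk_edges p q0 huv.ne hE).2
  have hQ2 : Q.2 = b := by
    have hE := hall (zipWalk p0 q0) (by rw [zipWalk_length, hp0, hq0, hd])
    exact ((zipWalk_edges p0 q0 huv.ne hE).1).symm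
  have hP2 : P.2 = b := by
    have hE := hall ((zipWalk p0.reverse q0.reverse).reverse)
      (by rw [Walk.length_reverse, zipWalk_length, Walk.length_reverse,
              Walk.length_reverse, hp0, hq0, hd])
    rw [Walk.edges_reverse, List.mem_reverse] at hE
    exact ((zipWalk_edges p0.reverse q0.reverse huv.ne hE).1).symm
  exact ⟨hP2, hQ2, hreachG, key⟩

/-- Adjacent vertices monitor the edge between them. -/
lemma monitors_adj {V : Type*} {G : SimpleGraph V} {u v : V} (h : G.Adj u v) :
    Monitors G u v s(u, v) := by
  refine ⟨h.reachable, fun p hp => ?_⟩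
  rw [SimpleGraph.dist_eq_one_iff_adj.mpr h] at hp
  cases p with
  | nil => simp at hp
  | cons h' p' =>
      rw [Walk.length_cons] at hp
      have h0 : p'.length = 0 := by omega
      have := Walk.eq_of_length_eq_zero h0
      subst this
      rw [Walk.edges_cons]
      exact List.mem_cons_self

/-- The whole vertex set is always an MEG-set. -/
lemma isMEGSet_univ {V : Type*} [Fintype V] (G : SimpleGraph V) :
    IsMEGSet G ↑(Finset.univ : Finset V) := by
  intro e he
  induction e using Sym2.ind with
  | _ u v =>
    rw [SimpleGraph.mem_edgeSet] at he
    exact ⟨u, by simp, v, by simp, monitors_adj he⟩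

lemma meg_le_card {V : Type*} [Fintype V] (G : SimpleGraph V) :
    meg G ≤ Fintype.card V :=
  Nat.sInf_le ⟨Finset.univ, isMEGSet_univ G, Finset.card_univ⟩

/-- If `G` is MEG-extremal, every vertex has a "private" edge: one whose
monitoring pairs all contain that vertex. -/
lemma exists_private_edge {α : Type*} [Fintype α] {G : SimpleGraph α}
    (hG : meg G = Fintype.card α) (a : α) :
    ∃ e ∈ G.edgeSet, ∀ x y, Monitors G x y e → x = a ∨ y = a := by
  classical
  by_contra hcon
  push_neg at hcon
  have hM : IsMEGSet G ↑(Finset.univ.erase a) := by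
    intro e he
    obtain ⟨x, y, hmon, hx, hy⟩ := hcon e he
    exact ⟨x, by simp [hx], y, by simp [hy], hmon⟩
  have hle : meg G ≤ (Finset.univ.erase a).card := Nat.sInf_le ⟨_, hM, rfl⟩
  rw [Finset.card_erase_of_mem (Finset.mem_univ a), Finset.card_univ, hG] at hle
  have hpos : 0 < Fintype.card α := Fintype.card_pos_iff.mpr ⟨a⟩
  omega

end MEGAux

open MEGAux in
/-- if `G` is MEG-extremal then so is the strong product `G ⊠ H`. -/
theorem meg_strongProd_extremal {α β : Type*} [Fintype α] [Fintype β]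
    (G : SimpleGraph α) (H : SimpleGraph β) (hG : meg G = Fintype.card α) :
    meg (strongProd G H) = Fintype.card (α × β) := by
  have hne : {n : ℕ | ∃ M : Finset (α × β), IsMEGSet (strongProd G H) ↑M ∧
      M.card = n}.Nonempty :=
    ⟨Fintype.card (α × β), Finset.univ, isMEGSet_univ _, Finset.card_univ⟩
  have hmem : ∃ M : Finset (α × β), IsMEGSet (strongProd G H) ↑M ∧
      M.card = meg (strongProd G H) := Nat.sInf_mem hne
  obtain ⟨M, hM, hcard⟩ := hmem
  have hMuniv : M = Finset.univ := by
    apply Finset.eq_univ_of_forall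
    rintro ⟨a, b⟩
    obtain ⟨e, he, hpriv⟩ := exists_private_edge hG a
    revert he hpriv
    induction e using Sym2.ind with
    | _ u v =>
      intro he hpriv
      rw [SimpleGraph.mem_edgeSet] at he
      have hE : s(((u : α), b), ((v : α), b)) ∈ (strongProd G H).edgeSet :=
        (SimpleGraph.mem_edgeSet _).mpr (Or.inr (Or.inl ⟨he, rfl⟩))
      obtain ⟨P, hP, Q, hQ, hmon⟩ := hM _ hE
      obtain ⟨hP2, hQ2, hmonG⟩ := monitors_of_monitors_prod he hmon
      rcases hpriv P.1 Q.1 hmonG with h | h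
      · have : (a, b) = P := Prod.ext h.symm hP2.symm
        rw [this]; exact hP
      · have : (a, b) = Q := Prod.ext h.symm hQ2.symm
        rw [this]; exact hQ
  rw [← hcard, hMuniv, Finset.card_univ]
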